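/- (T-Drazin inverse via limit) Let A ∈ C^{n×n×p} be a complex tensor with T-index k = Ind(bcirc(A)). For every integer l ≥ k, the T-Drazin inverse is given by A^D = lim_{z→0} (A^{l+1} + zI)^{-1} * A^l, where I is the identity tensor, the inverse and products are T-products, and the limit is over z ∈ C with A^{l+1} + zI invertible. In particular A^D = lim_{z→0} (A^{n+1} + zI)^{-1} * A^n. -/

import Mathlib

open Matrix Kronecker Complex Polynomial
open Fin.NatCast Fin.CommRing

noncomputable section

/-- Block circulant matrix of a third-order tensor given by its frontal slices. -/
def bcirc {m n p : ℕ} (A : Fin p → Matrix (Fin m) (Fin n) ℂ) :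
    Matrix (Fin p × Fin m) (Fin p × Fin n) ℂ :=
  Matrix.of fun jr kc => A (jr.1 - kc.1) jr.2 kc.2

/-- The tensor T-product. -/
def tmul {m n s p : ℕ} (A : Fin p → Matrix (Fin m) (Fin n) ℂ)
    (B : Fin p → Matrix (Fin n) (Fin s) ℂ) : Fin p → Matrix (Fin m) (Fin s) ℂ :=
  fun i => ∑ j : Fin p, A (i - j) * B j

/-- The identity tensor. -/
def tId {n p : ℕ} [NeZero p] : Fin p → Matrix (Fin n) (Fin n) ℂ :=
  fun i => if i = 0 then 1 else 0

/-- T-product powers of a tensor. -/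
def tpow {n p : ℕ} [NeZero p] (A : Fin p → Matrix (Fin n) (Fin n) ℂ) : ℕ → Fin p → Matrix (Fin n) (Fin n) ℂ
  | 0 => tId
  | k + 1 => tmul (tpow A k) A

/-- Conjugate transpose of a tensor. -/
def tconjT {m n p : ℕ} [NeZero p] (A : Fin p → Matrix (Fin m) (Fin n) ℂ) :
    Fin p → Matrix (Fin n) (Fin m) ℂ :=
  fun i => (A (-i))ᴴ

/-- Invertibility with respect to the T-product. -/
def TInvertible {n p : ℕ} [NeZero p] (A : Fin p → Matrix (Fin n) (Fin n) ℂ) : Prop :=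
  ∃ B, tmul A B = tId ∧ tmul B A = tId

/-- `fold` of an `np × n` matrix back into a tensor (first block column). -/
def tfold {n p : ℕ} [NeZero p] (M : Matrix (Fin p × Fin n) (Fin p × Fin n) ℂ) :
    Fin p → Matrix (Fin n) (Fin n) ℂ :=
  fun i => Matrix.of fun r c => M (i, r) ((0 : Fin p), c)

/-- The primitive root ω = e^{-2πi/p}. -/
def tomega (p : ℕ) : ℂ := Complex.exp (-2 * Real.pi * Complex.I / p)

/-- The (unitary) discrete Fourier matrix. -/
def fourierMat (p : ℕ) : Matrix (Fin p) (Fin p) ℂ :=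
  Matrix.of fun j k => tomega p ^ ((j : ℕ) * (k : ℕ)) / Real.sqrt p

/-- Block diagonal matrix with `p` diagonal blocks of size `n × n`. -/
def bdiag {n p : ℕ} (B : Fin p → Matrix (Fin n) (Fin n) ℂ) :
    Matrix (Fin p × Fin n) (Fin p × Fin n) ℂ :=
  Matrix.of fun jr kc => if jr.1 = kc.1 then B jr.1 jr.2 kc.2 else 0


/-- The tensor inverse via `bcirc`: `fold ((bcirc A)⁻¹ · Ê₁)`. -/
def tinv {n p : ℕ} [NeZero p] (A : Fin p → Matrix (Fin n) (Fin n) ℂ) :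
    Fin p → Matrix (Fin n) (Fin n) ℂ :=
  tfold (bcirc A)⁻¹

section AuxDrazin
set_option linter.unusedSectionVars false
variable {n p : ℕ} [NeZero p]

lemma bcirc_add (A B : Fin p → Matrix (Fin n) (Fin n) ℂ) :
    bcirc (A + B) = bcirc A + bcirc B := by
  ext ⟨j, r⟩ ⟨k, c⟩; simp [bcirc]

lemma bcirc_smul (z : ℂ) (A : Fin p → Matrix (Fin n) (Fin n) ℂ) :
    bcirc (z • A) = z • bcirc A := by
  ext ⟨j, r⟩ ⟨k, c⟩; simp [bcirc]

lemma bcirc_one : bcirc (tId : Fin p → Matrix (Fin n) (Fin n) ℂ) = 1 := by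
  ext ⟨j, r⟩ ⟨k, c⟩
  simp only [bcirc, tId, Matrix.of_apply]
  by_cases h : j = k
  · subst h; simp [Matrix.one_apply, Prod.ext_iff]
  · rw [if_neg (by simpa [sub_eq_zero] using h)]
    simp [Matrix.one_apply, Prod.ext_iff, h]

lemma bcirc_tmul {m s : ℕ} (A : Fin p → Matrix (Fin m) (Fin n) ℂ)
    (B : Fin p → Matrix (Fin n) (Fin s) ℂ) :
    bcirc (tmul A B) = bcirc A * bcirc B := by
  ext ⟨j, r⟩ ⟨k, c⟩
  simp only [bcirc, tmul, Matrix.of_apply, Matrix.mul_apply, Matrix.sum_apply,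
    Fintype.sum_prod_type]
  refine Fintype.sum_equiv (Equiv.addRight k) _ _ fun t => Finset.sum_congr rfl fun s _ => ?_
  simp [sub_add_eq_sub_sub, sub_right_comm]

lemma tfold_bcirc {A : Fin p → Matrix (Fin n) (Fin n) ℂ} : tfold (bcirc A) = A := by
  funext i; ext r c; simp [tfold, bcirc]

lemma bcirc_tpow (A : Fin p → Matrix (Fin n) (Fin n) ℂ) (l : ℕ) :
    bcirc (tpow A l) = (bcirc A) ^ l := by
  induction l with
  | zero => simpa [tpow] using bcirc_one
  | succ l ih => rw [tpow, bcirc_tmul, ih, pow_succ]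

/-- Auxiliary shift tensor. -/
def tshift {n p : ℕ} [NeZero p] : Fin p → Matrix (Fin n) (Fin n) ℂ :=
  fun i => if i = 1 then 1 else 0

lemma bcirc_tshift_apply (t b : Fin p) (s c : Fin n) :
    bcirc (tshift : Fin p → Matrix (Fin n) (Fin n) ℂ) (t, s) (b, c)
      = if t = b + 1 ∧ s = c then 1 else 0 := by
  simp only [bcirc, tshift, Matrix.of_apply]
  by_cases h : t = b + 1
  · have : t - b = 1 := by rw [h]; simp
    rw [if_pos this]
    by_cases hsc : s = c
    · simp [Matrix.one_apply, hsc, h]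
    · simp [Matrix.one_apply, hsc, h]
  · have : t - b ≠ 1 := by
      intro hc
      exact h (by rw [← hc]; simp [sub_add_cancel])
    rw [if_neg this]
    simp [h]

lemma mul_P_apply (M : Matrix (Fin p × Fin n) (Fin p × Fin n) ℂ) (a b : Fin p) (r c : Fin n) :
    (M * bcirc (tshift : Fin p → Matrix (Fin n) (Fin n) ℂ)) (a, r) (b, c) = M (a, r) (b + 1, c) := by
  rw [Matrix.mul_apply]
  rw [Finset.sum_eq_single ((b + 1 : Fin p), c)]
  · rw [bcirc_tshift_apply, if_pos ⟨rfl, rfl⟩, mul_one]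
  · rintro ⟨t, s⟩ _ hne
    rw [bcirc_tshift_apply, if_neg, mul_zero]
    rintro ⟨h1, h2⟩; exact hne (by rw [h1, h2])
  · intro h; exact absurd (Finset.mem_univ _) h

lemma P_mul_apply (M : Matrix (Fin p × Fin n) (Fin p × Fin n) ℂ) (a b : Fin p) (r c : Fin n) :
    (bcirc (tshift : Fin p → Matrix (Fin n) (Fin n) ℂ) * M) (a, r) (b, c) = M (a - 1, r) (b, c) := by
  rw [Matrix.mul_apply]
  rw [Finset.sum_eq_single ((a - 1 : Fin p), r)]
  · rw [bcirc_tshift_apply, if_pos ⟨by simp [sub_add_cancel], rfl⟩, one_mul]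
  · rintro ⟨t, s⟩ _ hne
    rw [bcirc_tshift_apply, if_neg, zero_mul]
    rintro ⟨h1, h2⟩
    exact hne (by rw [h1, h2]; simp)
  · intro h; exact absurd (Finset.mem_univ _) h

lemma eq_bcirc_tfold_of_comm (M : Matrix (Fin p × Fin n) (Fin p × Fin n) ℂ)
    (h : M * bcirc (tshift : Fin p → Matrix (Fin n) (Fin n) ℂ)
        = bcirc (tshift : Fin p → Matrix (Fin n) (Fin n) ℂ) * M) :
    M = bcirc (tfold M) := by
  have key : ∀ (a b : Fin p) (r c : Fin n), M (a, r) (b + 1, c) = M (a - 1, r) (b, c) := by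
    intro a b r c
    rw [← mul_P_apply M a b r c, h, P_mul_apply]
  have main : ∀ (m : ℕ) (a : Fin p) (r c : Fin n),
      M (a, r) ((m : Fin p), c) = M (a - (m : Fin p), r) (0, c) := by
    intro m
    induction m with
    | zero => intro a r c; simp
    | succ m ih =>
      intro a r c
      have hc : ((m + 1 : ℕ) : Fin p) = (m : Fin p) + 1 := by push_cast; ring
      rw [hc, key, ih]
      congr 2
      rw [sub_sub, add_comm]
  ext ⟨a, r⟩ ⟨b, c⟩
  show M (a, r) (b, c) = (tfold M) (a - b) r c
  have hb : ((b : ℕ) : Fin p) = b := Fin.cast_val_eq_self b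
  rw [← hb, main (b : ℕ) a r c]
  simp [tfold, hb]

lemma bcirc_comm_P (T : Fin p → Matrix (Fin n) (Fin n) ℂ) :
    bcirc T * bcirc (tshift : Fin p → Matrix (Fin n) (Fin n) ℂ)
      = bcirc (tshift : Fin p → Matrix (Fin n) (Fin n) ℂ) * bcirc T := by
  ext ⟨a, r⟩ ⟨b, c⟩
  rw [mul_P_apply, P_mul_apply]
  show T (a - (b + 1)) r c = T (a - 1 - b) r c
  congr 1
  rw [sub_add_eq_sub_sub, sub_right_comm]

lemma bcirc_tinv (T : Fin p → Matrix (Fin n) (Fin n) ℂ) :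
    bcirc (tinv T) = (bcirc T)⁻¹ := by
  refine (eq_bcirc_tfold_of_comm _ ?_).symm
  by_cases h : IsUnit (bcirc T).det
  · have e1 : bcirc T * (bcirc T)⁻¹ = 1 := Matrix.mul_nonsing_inv _ h
    have e2 : (bcirc T)⁻¹ * bcirc T = 1 := Matrix.nonsing_inv_mul _ h
    calc (bcirc T)⁻¹ * bcirc tshift
        = (bcirc T)⁻¹ * (bcirc tshift * bcirc T * (bcirc T)⁻¹) := by
          rw [mul_assoc, e1, mul_one]
      _ = (bcirc T)⁻¹ * (bcirc T * bcirc tshift * (bcirc T)⁻¹) := by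
          rw [← bcirc_comm_P]
      _ = bcirc tshift * (bcirc T)⁻¹ := by
          simp only [← mul_assoc]; rw [e2, one_mul]
  · rw [Matrix.nonsing_inv_apply_not_isUnit _ h, Matrix.zero_mul, Matrix.mul_zero]

lemma tmul_tinv_eq (T S : Fin p → Matrix (Fin n) (Fin n) ℂ) :
    tmul (tinv T) S = tfold ((bcirc T)⁻¹ * bcirc S) := by
  conv_lhs => rw [← tfold_bcirc (A := tmul (tinv T) S)]
  rw [bcirc_tmul, bcirc_tinv]

section DrazinLimit
variable {ι : Type*} [Fintype ι] [DecidableEq ι]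

lemma drazin_key1 (N D : Matrix ι ι ℂ) (hcomm : N * D = D * N)
    (h2 : D * N * D = D) : ∀ j : ℕ, N ^ j * D ^ (j + 1) = D := by
  intro j
  induction j with
  | zero => simp
  | succ j ih =>
    have c : Commute N D := hcomm
    calc N ^ (j+1) * D ^ (j+2)
        = (N * N ^ j) * (D ^ (j+1) * D) := by rw [← pow_succ, ← pow_succ']
      _ = N * (N ^ j * D ^ (j+1)) * D := by noncomm_ring
      _ = N * D * D := by rw [ih]
      _ = D * N * D := by rw [hcomm]
      _ = D := h2

lemma drazin_limit (N D : Matrix ι ι ℂ) (l : ℕ)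
    (hcomm : N * D = D * N) (h2 : D * N * D = D) (hl : N ^ (l + 1) * D = N ^ l) :
    Filter.Tendsto (fun z : ℂ => (N ^ (l + 1) + z • 1)⁻¹ * N ^ l)
      (nhdsWithin 0 {z : ℂ | IsUnit (N ^ (l + 1) + z • 1)}) (nhds D) := by
  set D' : Matrix ι ι ℂ := D ^ (l + 1) with hD'
  set g : ℂ → Matrix ι ι ℂ := fun z => D - z • (D ^ (l + 2) * (1 + z • D')⁻¹) with hg
  have hg0 : g 0 = D := by simp [hg]
  -- continuity of g at 0
  have hf1 : Continuous fun z : ℂ => 1 + z • D' :=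
    continuous_const.add (continuous_id.smul continuous_const)
  have hdet1 : (1 + (0 : ℂ) • D').det = 1 := by simp
  have hinvAt : ContinuousAt (fun z : ℂ => (1 + z • D')⁻¹) 0 := by
    refine ContinuousAt.comp ?_ hf1.continuousAt
    refine continuousAt_matrix_inv _ ?_
    rw [Ring.inverse_eq_inv']
    refine continuousAt_inv₀ ?_
    rw [hdet1]; exact one_ne_zero
  have hgc : ContinuousAt g 0 := by
    refine ContinuousAt.sub continuousAt_const ?_
    exact ContinuousAt.smul continuousAt_id (ContinuousAt.mul continuousAt_const hinvAt)
  -- eventual equality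
  have hV : ∀ᶠ z : ℂ in nhds 0, IsUnit (1 + z • D').det := by
    have : ContinuousAt (fun z : ℂ => (1 + z • D').det) 0 :=
      (hf1.matrix_det).continuousAt
    have hne := this.eventually_ne (by rw [hdet1]; exact one_ne_zero)
    exact hne.mono fun z hz => isUnit_iff_ne_zero.2 hz
  have hU : ∀ᶠ z : ℂ in nhdsWithin 0 {z : ℂ | IsUnit (N ^ (l + 1) + z • 1)},
      IsUnit (N ^ (l + 1) + z • 1) := eventually_mem_nhdsWithin
  have heq : ∀ᶠ z : ℂ in nhdsWithin 0 {z : ℂ | IsUnit (N ^ (l + 1) + z • 1)},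
      g z = (N ^ (l + 1) + z • 1)⁻¹ * N ^ l := by
    filter_upwards [hU, hV.filter_mono nhdsWithin_le_nhds] with z hz1 hz2
    set Mz : Matrix ι ι ℂ := N ^ (l + 1) + z • 1 with hMz
    have hdetM : IsUnit Mz.det := (Matrix.isUnit_iff_isUnit_det _).1 hz1
    have idA : Mz * D ^ (l + 2) = D * (1 + z • D') := by
      have e1 : N ^ (l + 1) * D ^ (l + 2) = D := drazin_key1 N D hcomm h2 (l + 1)
      rw [hMz, add_mul, e1, Matrix.smul_mul, one_mul, mul_add, mul_one, Matrix.mul_smul,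
        ← pow_succ']
    have idB : Mz * D = N ^ l + z • D := by
      rw [hMz, add_mul, hl, Matrix.smul_mul, one_mul]
    have hMzD : Mz⁻¹ * D = D ^ (l + 2) * (1 + z • D')⁻¹ := by
      have h3 : D ^ (l + 2) = Mz⁻¹ * (D * (1 + z • D')) := by
        rw [← idA, Matrix.nonsing_inv_mul_cancel_left _ _ hdetM]
      rw [h3, ← Matrix.mul_assoc, Matrix.mul_assoc (Mz⁻¹ * D),
        Matrix.mul_nonsing_inv _ hz2, Matrix.mul_one]
    have hNl : (N ^ l : Matrix ι ι ℂ) = Mz * D - z • D := by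
      rw [idB]; abel
    rw [hg]
    show D - z • (D ^ (l + 2) * (1 + z • D')⁻¹) = Mz⁻¹ * N ^ l
    rw [← hMzD, hNl, Matrix.mul_sub, Matrix.nonsing_inv_mul_cancel_left _ _ hdetM,
      Matrix.mul_smul]
  have hgt : Filter.Tendsto g (nhdsWithin 0 {z : ℂ | IsUnit (N ^ (l + 1) + z • 1)}) (nhds D) := by
    rw [← hg0]
    exact hgc.tendsto.mono_left nhdsWithin_le_nhds
  exact hgt.congr' heq

end DrazinLimit

section RankStab
set_option linter.unusedSectionVars false
variable {n p : ℕ} [NeZero p]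

local notation "V" => (Fin p × Fin n → ℂ)

/-- ω is a primitive p-th root of unity. -/
lemma tomega_primitive : IsPrimitiveRoot (tomega p) p := by
  have h := (Complex.isPrimitiveRoot_exp p (NeZero.ne p)).inv
  have e : tomega p = (Complex.exp (2 * Real.pi * Complex.I / p))⁻¹ := by
    rw [← Complex.exp_neg, tomega]
    congr 1
    ring
  rwa [e]

lemma pow_mod_helper {μ : ℂ} (hμ : μ ^ p = 1) (m : ℕ) : μ ^ (m % p) = μ ^ m := by
  conv_rhs => rw [← Nat.div_add_mod m p]
  rw [pow_add, pow_mul, hμ, one_pow, one_mul]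

lemma End_pow_mod_helper {W : Type*} [AddCommMonoid W] [Module ℂ W]
    {S : Module.End ℂ W} (hS : S ^ p = 1) (m : ℕ) : S ^ (m % p) = S ^ m := by
  conv_rhs => rw [← Nat.div_add_mod m p]
  rw [pow_add, pow_mul, hS, one_pow, one_mul]

/-- The shift endomorphism. -/
def Send : Module.End ℂ (Fin p × Fin n → ℂ) :=
  (bcirc (tshift : Fin p → Matrix (Fin n) (Fin n) ℂ)).mulVecLin

lemma Send_apply (v : V) (a : Fin p) (r : Fin n) : Send v (a, r) = v (a - 1, r) := by
  show (Matrix.mulVec _ v) (a, r) = v (a - 1, r)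
  rw [Matrix.mulVec, dotProduct]
  rw [Finset.sum_eq_single ((a - 1 : Fin p), r)]
  · rw [bcirc_tshift_apply, if_pos ⟨by simp [sub_add_cancel], rfl⟩, one_mul]
  · rintro ⟨t, s⟩ _ hne
    rw [bcirc_tshift_apply, if_neg, zero_mul]
    rintro ⟨h1, h2⟩
    exact hne (by rw [h1, h2]; simp)
  · intro h; exact absurd (Finset.mem_univ _) h

lemma Send_pow_apply (m : ℕ) (v : V) (a : Fin p) (r : Fin n) :
    ((Send ^ m : Module.End ℂ V) v) (a, r) = v (a - (m : Fin p), r) := by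
  induction m generalizing v a r with
  | zero => simp
  | succ m ih =>
    rw [pow_succ', Module.End.mul_apply, Send_apply, ih]
    congr 2
    push_cast
    rw [sub_sub, add_comm]

lemma Send_pow_p : (Send ^ p : Module.End ℂ V) = 1 := by
  apply LinearMap.ext
  intro v
  funext ar
  obtain ⟨a, r⟩ := ar
  rw [Send_pow_apply]
  simp

lemma mulVecLin_pow (M : Matrix (Fin p × Fin n) (Fin p × Fin n) ℂ) (m : ℕ) :
    (M ^ m).mulVecLin = (M.mulVecLin ^ m : Module.End ℂ V) := by
  induction m with
  | zero => rw [pow_zero, pow_zero, Matrix.mulVecLin_one]; rfl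
  | succ m ih => rw [pow_succ, pow_succ, Matrix.mulVecLin_mul, ih]; rfl

lemma rank_stab (A : Fin p → Matrix (Fin n) (Fin n) ℂ) :
    ((bcirc A) ^ n).rank = ((bcirc A) ^ (n + 1)).rank := by
  classical
  have hCS0 : (bcirc A).mulVecLin * Send = Send * (bcirc A).mulVecLin := by
    unfold Send
    rw [Module.End.mul_eq_comp, Module.End.mul_eq_comp, ← Matrix.mulVecLin_mul,
      ← Matrix.mulVecLin_mul, bcirc_comm_P]
  set C : Module.End ℂ V := (bcirc A).mulVecLin with hC
  have hCS : C * Send = Send * C := hCS0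
  -- the key kernel inclusion
  have hker : ∀ v : V, (C ^ (n + 1)) v = 0 → (C ^ n) v = 0 := by
    intro v hv
    set ω : ℂ := tomega p with hω
    have hωp : ω ^ p = 1 := tomega_primitive.pow_eq_one
    -- for each t, the projected vector lies in an eigenspace of Send of dim ≤ n
    have key : ∀ t : Fin p,
        (C ^ n) (∑ j : Fin p, (ω ^ (t : ℕ)) ^ (j : ℕ) • (Send ^ (j : ℕ)) v) = 0 := by
      intro t
      set μ : ℂ := ω ^ (t : ℕ) with hμdef
      have hμp : μ ^ p = 1 := by rw [hμdef, ← pow_mul, mul_comm, pow_mul, hωp, one_pow]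
      set w : V := ∑ j : Fin p, μ ^ (j : ℕ) • (Send ^ (j : ℕ)) v with hw
      set T : Module.End ℂ V := μ • Send - 1 with hT
      -- w is in the eigenspace W = ker T
      have hwW : T w = 0 := by
        have : (μ • Send) w = w := by
          rw [hw, map_sum]
          have step : ∀ j : Fin p,
              (μ • Send) (μ ^ (j : ℕ) • (Send ^ (j : ℕ)) v)
                = μ ^ ((j + 1 : Fin p) : ℕ) • (Send ^ ((j + 1 : Fin p) : ℕ)) v := by
            intro j
            have e1 : ((j + 1 : Fin p) : ℕ) = ((j : ℕ) + 1) % p := by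
              rw [Fin.add_def]; simp
            rw [e1, pow_mod_helper hμp, End_pow_mod_helper Send_pow_p,
              LinearMap.smul_apply, LinearMap.map_smul, smul_smul, ← pow_succ',
              pow_succ' Send, Module.End.mul_apply]
          rw [Finset.sum_congr rfl fun j _ => step j]
          exact Fintype.sum_equiv (Equiv.addRight 1) _ _ (fun j => rfl)
        rw [hT, LinearMap.sub_apply, Module.End.one_apply, this, sub_self]
      -- C commutes with T
      have hCT : T * C = C * T := by
        rw [hT, sub_mul, mul_sub, one_mul, mul_one, Algebra.smul_mul_assoc,
          Algebra.mul_smul_comm, hCS]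
      -- C^{n+1} w = 0
      have hCw : (C ^ (n + 1)) w = 0 := by
        have hc : Commute C Send := hCS
        rw [hw, map_sum]
        have : ∀ j : Fin p, (C ^ (n + 1)) (μ ^ (j : ℕ) • (Send ^ (j : ℕ)) v) = 0 := by
          intro j
          rw [LinearMap.map_smul]
          have := (hc.pow_pow (n + 1) (j : ℕ)).symm
          have happ : (C ^ (n + 1)) ((Send ^ (j : ℕ)) v)
              = (Send ^ (j : ℕ)) ((C ^ (n + 1)) v) := by
            have h2 : ((C ^ (n+1) * Send ^ (j : ℕ) : Module.End ℂ V)) v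
                = ((Send ^ (j:ℕ) * C ^ (n+1) : Module.End ℂ V)) v := by
              rw [this]
            simpa using h2
          rw [happ, hv, map_zero, smul_zero]
        rw [Finset.sum_congr rfl fun j _ => this j, Finset.sum_const_zero]
      -- the eigenspace
      set W : Submodule ℂ V := LinearMap.ker T with hWdef
      have hmapsto : ∀ u ∈ W, C u ∈ W := by
        intro u hu
        rw [hWdef, LinearMap.mem_ker] at hu ⊢
        have : (T * C) u = (C * T) u := by rw [hCT]
        rw [Module.End.mul_apply, Module.End.mul_apply, hu, map_zero] at this
        exact this
      -- entrywise relation in W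
      have hWrel : ∀ u : V, u ∈ W → ∀ (a : Fin p) (r : Fin n), μ * u (a - 1, r) = u (a, r) := by
        intro u hu a r
        rw [hWdef, LinearMap.mem_ker, hT, LinearMap.sub_apply, Module.End.one_apply,
          sub_eq_zero] at hu
        have := congrFun hu (a, r)
        rw [LinearMap.smul_apply, Pi.smul_apply, Send_apply] at this
        simpa using this
      -- finrank W ≤ n
      have hfr : Module.finrank ℂ W ≤ n := by
        have hinj : Function.Injective
            ((LinearMap.funLeft ℂ ℂ (fun r : Fin n => ((0 : Fin p), r))).comp W.subtype) := by
          intro u1 u2 h12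
          have h0 : ∀ r : Fin n, (u1 : V) (0, r) = (u2 : V) (0, r) := fun r => congrFun h12 r
          apply Subtype.ext
          funext ar
          obtain ⟨a, r⟩ := ar
          have main : ∀ m : ℕ, ∀ r : Fin n,
              (u1 : V) ((m : Fin p), r) = (u2 : V) ((m : Fin p), r) := by
            intro m
            induction m with
            | zero => intro r; simpa using h0 r
            | succ m ih =>
              intro r
              have e1 : ((m + 1 : ℕ) : Fin p) = (m : Fin p) + 1 := by push_cast; ring
              have r1 := hWrel u1 u1.2 ((m : Fin p) + 1) r
              have r2 := hWrel u2 u2.2 ((m : Fin p) + 1) r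
              rw [add_sub_cancel_right] at r1 r2
              rw [e1, ← r1, ← r2, ih r]
          have := main (a : ℕ) r
          rwa [Fin.cast_val_eq_self] at this
        calc Module.finrank ℂ W ≤ Module.finrank ℂ (Fin n → ℂ) :=
              LinearMap.finrank_le_finrank_of_injective hinj
          _ = n := Module.finrank_fin_fun ℂ
      -- restrict C to W
      set E : Module.End ℂ W := C.restrict hmapsto with hE
      have hEpow : ∀ (m : ℕ) (u : W), (((E ^ m) u : W) : V) = (C ^ m) (u : V) := by
        intro m
        induction m with
        | zero => intro u; rfl
        | succ m ih =>
          intro u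
          rw [pow_succ', pow_succ', Module.End.mul_apply, Module.End.mul_apply]
          have h1 : ((E ((E ^ m) u) : W) : V) = C (((E ^ m) u : W) : V) := rfl
          rw [h1, ih]
      have hwmem : w ∈ W := by rw [hWdef, LinearMap.mem_ker]; exact hwW
      have hE1 : (E ^ (n + 1)) ⟨w, hwmem⟩ = 0 := by
        apply Subtype.ext
        rw [hEpow]
        exact hCw
      have hE2 : (E ^ n) ⟨w, hwmem⟩ = 0 := by
        have hk1 : (⟨w, hwmem⟩ : W) ∈ LinearMap.ker (E ^ (n + 1)) := hE1
        have hk2 := Module.End.ker_pow_le_ker_pow_finrank E (n + 1) hk1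
        obtain ⟨d, hd⟩ : ∃ d, n = d + Module.finrank ℂ W :=
          ⟨n - Module.finrank ℂ W, by omega⟩
        have : (E ^ n) = E ^ d * E ^ (Module.finrank ℂ W) := by rw [← pow_add, ← hd]
        rw [LinearMap.mem_ker] at hk2
        show (E ^ n) _ = 0
        rw [this, Module.End.mul_apply, hk2, map_zero]
      have := congrArg (Subtype.val) hE2
      rw [hEpow] at this
      exact this
    -- sum over t gives p • C^n v = 0
    have hsum : (∑ t : Fin p, ∑ j : Fin p, (ω ^ (t : ℕ)) ^ (j : ℕ) • (Send ^ (j : ℕ)) v)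
        = (p : ℂ) • v := by
      rw [Finset.sum_comm]
      have inner : ∀ j : Fin p,
          (∑ t : Fin p, (ω ^ (t : ℕ)) ^ (j : ℕ) • (Send ^ (j : ℕ)) v)
            = (∑ t : Fin p, (ω ^ (j : ℕ)) ^ (t : ℕ)) • (Send ^ (j : ℕ)) v := by
        intro j
        rw [Finset.sum_smul]
        refine Finset.sum_congr rfl fun t _ => ?_
        rw [← pow_mul, ← pow_mul, mul_comm]
      rw [Finset.sum_congr rfl fun j _ => inner j]
      rw [Finset.sum_eq_single (0 : Fin p)]
      · simp
      · intro j _ hj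
        have hgeom : (∑ t : Fin p, (ω ^ (j : ℕ)) ^ (t : ℕ)) = 0 := by
          rw [Fin.sum_univ_eq_sum_range]
          have hne1 : ω ^ (j : ℕ) ≠ 1 :=
            tomega_primitive.pow_ne_one_of_pos_of_lt
              (fun h => hj (Fin.ext (by simpa using h))) j.isLt
          rw [geom_sum_eq hne1, ← pow_mul, mul_comm, pow_mul, hωp, one_pow, sub_self,
            zero_div]
        rw [hgeom, zero_smul]
      · intro h; exact absurd (Finset.mem_univ _) h
    have hz : (C ^ n) ((p : ℂ) • v) = 0 := by
      rw [← hsum, map_sum]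
      rw [Finset.sum_congr rfl fun t _ => key t, Finset.sum_const_zero]
    rw [LinearMap.map_smul] at hz
    have hp : (p : ℂ) ≠ 0 := Nat.cast_ne_zero.2 (NeZero.ne p)
    exact (smul_eq_zero.1 hz).resolve_left hp
  -- conclude rank equality
  have hker_eq : LinearMap.ker ((C : Module.End ℂ V) ^ n) = LinearMap.ker (C ^ (n + 1)) := by
    apply le_antisymm
    · intro v hv
      rw [LinearMap.mem_ker] at hv ⊢
      rw [pow_succ', Module.End.mul_apply, hv, map_zero]
    · intro v hv
      rw [LinearMap.mem_ker] at hv ⊢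
      exact hker v hv
  have e1 : ((bcirc A) ^ n).mulVecLin = C ^ n := mulVecLin_pow _ n
  have e2 : ((bcirc A) ^ (n + 1)).mulVecLin = C ^ (n + 1) := mulVecLin_pow _ (n + 1)
  have r1 := LinearMap.finrank_range_add_finrank_ker ((C : Module.End ℂ V) ^ n)
  have r2 := LinearMap.finrank_range_add_finrank_ker ((C : Module.End ℂ V) ^ (n + 1))
  rw [hker_eq] at r1
  unfold Matrix.rank
  rw [e1, e2]
  omega

end RankStab

section Final
set_option linter.unusedSectionVars false
variable {n p : ℕ} [NeZero p]

lemma tfold_continuous : Continuous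
    (tfold : Matrix (Fin p × Fin n) (Fin p × Fin n) ℂ → (Fin p → Matrix (Fin n) (Fin n) ℂ)) := by
  refine continuous_pi fun i => continuous_matrix fun r c => ?_
  exact (continuous_apply ((0 : Fin p), c)).comp (continuous_apply (i, r))

end Final

end AuxDrazin

/-- the T-Drazin inverse (the tensor `X` satisfying the Drazin
equations at the T-index `k` of `A`) is given by the limit
`X = lim_{z→0} (A^{l+1} + zI)⁻¹ * A^l` for every `l ≥ k`; in particular for `l = n`. -/
theorem t_drazin_limit {n p : ℕ} [NeZero p]
    (A X : Fin p → Matrix (Fin n) (Fin n) ℂ) (k : ℕ)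
    (hk : ((bcirc A) ^ k).rank = ((bcirc A) ^ (k + 1)).rank)
    (hkmin : ∀ j : ℕ, ((bcirc A) ^ j).rank = ((bcirc A) ^ (j + 1)).rank → k ≤ j)
    (h1 : tmul (tmul (tpow A k) X) A = tpow A k)
    (h2 : tmul (tmul X A) X = X)
    (h3 : tmul A X = tmul X A) :
    (∀ l : ℕ, k ≤ l →
      Filter.Tendsto
        (fun z : ℂ => tmul (tinv (tpow A (l + 1) + z • tId)) (tpow A l))
        (nhdsWithin 0 {z : ℂ | IsUnit (bcirc (tpow A (l + 1) + z • tId))})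
        (nhds X)) ∧
      Filter.Tendsto
        (fun z : ℂ => tmul (tinv (tpow A (n + 1) + z • tId)) (tpow A n))
        (nhdsWithin 0 {z : ℂ | IsUnit (bcirc (tpow A (n + 1) + z • tId))})
        (nhds X) := by
  classical
  set N : Matrix (Fin p × Fin n) (Fin p × Fin n) ℂ := bcirc A with hN
  set Dm : Matrix (Fin p × Fin n) (Fin p × Fin n) ℂ := bcirc X with hDm
  have hcomm : N * Dm = Dm * N := by
    have := congrArg bcirc h3
    rwa [bcirc_tmul, bcirc_tmul] at this
  have h2' : Dm * N * Dm = Dm := by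
    have := congrArg bcirc h2
    rwa [bcirc_tmul, bcirc_tmul] at this
  have h1' : N ^ k * Dm * N = N ^ k := by
    have := congrArg bcirc h1
    rwa [bcirc_tmul, bcirc_tmul, bcirc_tpow] at this
  have hl' : ∀ l : ℕ, k ≤ l → N ^ (l + 1) * Dm = N ^ l := by
    intro l hle
    obtain ⟨m, rfl⟩ := Nat.exists_eq_add_of_le hle
    have base : N ^ (k + 1) * Dm = N ^ k := by
      rw [pow_succ, mul_assoc, hcomm, ← mul_assoc, h1']
    have e : N ^ (k + m + 1) = N ^ m * N ^ (k + 1) := by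
      rw [← pow_add]; congr 1; omega
    rw [e, mul_assoc, base, ← pow_add]
    congr 1; omega
  have main : ∀ l : ℕ, k ≤ l →
      Filter.Tendsto
        (fun z : ℂ => tmul (tinv (tpow A (l + 1) + z • tId)) (tpow A l))
        (nhdsWithin 0 {z : ℂ | IsUnit (bcirc (tpow A (l + 1) + z • tId))})
        (nhds X) := by
    intro l hle
    have hbc : ∀ z : ℂ, bcirc (tpow A (l + 1) + z • tId) = N ^ (l + 1) + z • 1 := by
      intro z
      rw [bcirc_add, bcirc_smul, bcirc_one, bcirc_tpow]
    have hfun : (fun z : ℂ => tmul (tinv (tpow A (l + 1) + z • tId)) (tpow A l))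
        = fun z : ℂ => tfold ((N ^ (l + 1) + z • 1)⁻¹ * N ^ l) := by
      funext z
      rw [tmul_tinv_eq, hbc z, bcirc_tpow]
    have hset : {z : ℂ | IsUnit (bcirc (tpow A (l + 1) + z • tId))}
        = {z : ℂ | IsUnit (N ^ (l + 1) + z • 1)} := by
      ext z; simp only [Set.mem_setOf_eq, hbc z]
    rw [hfun, hset]
    have hlim := drazin_limit N Dm l hcomm h2' (hl' l hle)
    have hcont := (tfold_continuous (n := n) (p := p)).tendsto Dm
    have := hcont.comp hlim
    have hXfold : tfold Dm = X := by rw [hDm, tfold_bcirc]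
    rw [hXfold] at this
    exact this
  refine ⟨main, main n (hkmin n ?_)⟩
  exact rank_stab A

end
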